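/- Let (X,u) and (Y,v) be closure spaces and {σ_α} a collection of Čech closure operators on Y^X. (1) If every σ_α is proper, then both the infimum ∧σ_α and the supremum ∨σ_α are proper. (2) If every σ_α is admissible, then the supremum ∨σ_α is admissible. -/
import Mathlib


open Set

universe u

/-- A Čech closure operator on a type `X`: it satisfies (C1) `cl ∅ = ∅`,
(C2) `A ⊆ cl A` and (C3) `cl (A ∪ B) = cl A ∪ cl B`.  The pair `(X, u)` is a
(Čech) closure space. -/
structure CechClosure (X : Type u) : Type u where
  cl : Set X → Set X
  cl_empty : cl ∅ = ∅
  subset_cl : ∀ A : Set X, A ⊆ cl A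
  cl_union : ∀ A B : Set X, cl (A ∪ B) = cl A ∪ cl B

namespace CechClosure

variable {X Y Z : Type u}

/-- The interior operator of a closure space: `int_u A = X \ u (X \ A)`. -/
def interior (u : CechClosure X) (A : Set X) : Set X := (u.cl Aᶜ)ᶜ

/-- `U` is a neighbourhood of `x` in `(X, u)` if `x ∈ int_u U`. -/
def Nhd (u : CechClosure X) (x : X) (U : Set X) : Prop := x ∈ u.interior U

theorem interior_subset (u : CechClosure X) (A : Set X) : u.interior A ⊆ A := by
  intro x hx
  by_contra h
  exact hx (u.subset_cl _ h)

theorem interior_inter (u : CechClosure X) (A B : Set X) :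
    u.interior (A ∩ B) = u.interior A ∩ u.interior B := by
  unfold interior
  rw [compl_inter, u.cl_union, compl_union]

theorem nhd_univ (u : CechClosure X) (x : X) : u.Nhd x univ := by
  simp [Nhd, interior, u.cl_empty]

theorem nhd_inter (u : CechClosure X) {x : X} {A B : Set X} (hA : u.Nhd x A)
    (hB : u.Nhd x B) : u.Nhd x (A ∩ B) := by
  have h := u.interior_inter A B
  unfold Nhd at *
  rw [h]
  exact ⟨hA, hB⟩

/-- A function `f : (X, u) → (Y, v)` between closure spaces is continuous if
`f (u A) ⊆ v (f A)` for every `A ⊆ X`. -/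
def Continuous (u : CechClosure X) (v : CechClosure Y) (f : X → Y) : Prop :=
  ∀ A : Set X, f '' u.cl A ⊆ v.cl (f '' A)

/-- The product of two closure spaces: `(z, x)` is in the closure of `S` iff every
"rectangle" `W ×ˢ U` of neighbourhoods `W` of `z` and `U` of `x` meets `S`. -/
def prod (w : CechClosure Z) (u : CechClosure X) : CechClosure (Z × X) where
  cl S := {p | ∀ W U, w.Nhd p.1 W → u.Nhd p.2 U → (W ×ˢ U ∩ S).Nonempty}
  cl_empty := by
    ext p
    simp only [mem_setOf_eq, mem_empty_iff_false, iff_false]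
    intro h
    rcases h univ univ (w.nhd_univ _) (u.nhd_univ _) with ⟨q, -, hq⟩
    exact hq
  subset_cl := by
    intro S p hp W U hW hU
    exact ⟨p, ⟨⟨w.interior_subset _ hW, u.interior_subset _ hU⟩, hp⟩⟩
  cl_union := by
    intro S T
    ext p
    simp only [mem_setOf_eq, mem_union]
    constructor
    · intro h
      by_contra hc
      push_neg at hc
      obtain ⟨h1, h2⟩ := hc
      simp only [← Set.not_nonempty_iff_eq_empty] at h1 h2
      obtain ⟨W1, U1, hW1, hU1, hne1⟩ := h1
      obtain ⟨W2, U2, hW2, hU2, hne2⟩ := h2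
      rcases h (W1 ∩ W2) (U1 ∩ U2) (w.nhd_inter hW1 hW2) (u.nhd_inter hU1 hU2) with
        ⟨q, ⟨⟨hq1, hq2⟩, hqST⟩⟩
      rcases hqST with hqS | hqT
      · exact hne1 ⟨q, ⟨⟨hq1.1, hq2.1⟩, hqS⟩⟩
      · exact hne2 ⟨q, ⟨⟨hq1.2, hq2.2⟩, hqT⟩⟩
    · rintro (h | h) W U hW hU
      · rcases h W U hW hU with ⟨q, hq1, hq2⟩
        exact ⟨q, hq1, Or.inl hq2⟩
      · rcases h W U hW hU with ⟨q, hq1, hq2⟩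
        exact ⟨q, hq1, Or.inr hq2⟩

/-- `Y^X`: the type of continuous functions between the closure spaces
`(X, u)` and `(Y, v)`. -/
def ContMap (u : CechClosure X) (v : CechClosure Y) : Type u :=
  {f : X → Y // Continuous u v f}

/-- A closure operator `σ` on `Y^X` is proper (splitting) if for every closure space
`(Z, w)`, continuity of `g : (Z, w) × (X, u) → (Y, v)` implies continuity of
`g* : (Z, w) → (Y^X, σ)`, where `g (z, x) = (g* z) x`. -/
def Proper (u : CechClosure X) (v : CechClosure Y) (σ : CechClosure (ContMap u v)) : Prop :=
  ∀ (Z : Type u) (w : CechClosure Z) (G : Z → ContMap u v),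
    Continuous (w.prod u) v (fun p => (G p.1).1 p.2) → Continuous w σ G

/-- A closure operator `σ` on `Y^X` is admissible (jointly continuous) if for every closure
space `(Z, w)`, continuity of `g* : (Z, w) → (Y^X, σ)` implies continuity of
`g : (Z, w) × (X, u) → (Y, v)`, where `g (z, x) = (g* z) x`. -/
def Admissible (u : CechClosure X) (v : CechClosure Y) (σ : CechClosure (ContMap u v)) : Prop :=
  ∀ (Z : Type u) (w : CechClosure Z) (G : Z → ContMap u v),
    Continuous w σ G → Continuous (w.prod u) v (fun p => (G p.1).1 p.2)

/-- A topological space regarded as a closure space via its (Kuratowski) closure operator. -/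
def ofTop {Z : Type u} (t : TopologicalSpace Z) : CechClosure Z :=
  letI := t
  { cl := fun A => _root_.closure A
    cl_empty := closure_empty
    subset_cl := fun _ => subset_closure
    cl_union := fun _ _ => closure_union }

/-- `le` is the order relation of a directed set: a reflexive and transitive relation on a
nonempty type in which every two elements have an upper bound. -/
structure IsDirectedOrder {Λ : Type*} (le : Λ → Λ → Prop) : Prop where
  refl : ∀ a, le a a
  trans : ∀ a b c, le a b → le b c → le a c
  directed : ∀ a b, ∃ c, le a c ∧ le b c
  nonempty : Nonempty Λ

/-- Convergence of a net `s : Λ → X` (with order `le` on `Λ`) to a point `x` in a closure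
space `(X, u)`: every neighbourhood of `x` contains `s l` residually. -/
def NetConv (u : CechClosure X) {Λ : Type*} (le : Λ → Λ → Prop) (s : Λ → X) (x : X) : Prop :=
  ∀ U : Set X, u.Nhd x U → ∃ l₀, ∀ l, le l₀ l → s l ∈ U

/-- The product order on `Λ × M`. -/
def prodLE {Λ M : Type*} (leΛ : Λ → Λ → Prop) (leM : M → M → Prop) :
    Λ × M → Λ × M → Prop :=
  fun p q => leΛ p.1 q.1 ∧ leM p.2 q.2

/-- A net `F : Λ → Y^X` converges continuously to `f ∈ Y^X` if for every `x ∈ X` and every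
net `s : M → X` converging to `x` in `(X, u)`, the net `(l, m) ↦ (F l) (s m)` (indexed by
`Λ × M` with the product order) converges to `f x` in `(Y, v)`. -/
def ContConv (u : CechClosure X) (v : CechClosure Y) {Λ : Type u} (leΛ : Λ → Λ → Prop)
    (F : Λ → ContMap u v) (f : ContMap u v) : Prop :=
  ∀ (M : Type u) (leM : M → M → Prop), IsDirectedOrder leM →
    ∀ (s : M → X) (x : X), NetConv u leM s x →
      NetConv v (prodLE leΛ leM) (fun p : Λ × M => (F p.1).1 (s p.2)) (f.1 x)

/-- The upper limit of a net `A : Λ → Set X` of subsets of a closure space `(X, u)`: the set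
of points `x` such that for every `l₀` and every neighbourhood `U` of `x` there is `l ≥ l₀`
with `A l ∩ U ≠ ∅`. -/
def UpperLim (u : CechClosure X) {Λ : Type*} (le : Λ → Λ → Prop) (A : Λ → Set X) : Set X :=
  {x | ∀ (l₀ : Λ) (U : Set X), u.Nhd x U → ∃ l, le l₀ l ∧ (A l ∩ U).Nonempty}

/-- `g : M → α` is a subnet of `f : Λ → α`: there is `φ : M → Λ` with `g = f ∘ φ` such that
`φ` is residually above any given index of `Λ`. -/
def IsSubnet {α : Type*} {Λ M : Type*} (leΛ : Λ → Λ → Prop) (leM : M → M → Prop)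
    (f : Λ → α) (g : M → α) : Prop :=
  ∃ φ : M → Λ, (∀ m, g m = f (φ m)) ∧ ∀ l₀, ∃ m₀, ∀ m, leM m₀ m → leΛ l₀ (φ m)

end CechClosure
namespace CechClosure

variable {X Y : Type u}

/-- The infimum (meet) `∧ σ_α` of a collection of closure operators: the neighbourhood
system at `x` is `⋂_α 𝒩_α(x)`, and a point lies in the closure of `A` iff every such
neighbourhood meets `A`. -/
def iInfCl {α : Type u} {ι : Type*} [Nonempty ι] (σ : ι → CechClosure α) : CechClosure α where
  cl A := {x | ∀ U : Set α, (∀ i, (σ i).Nhd x U) → (U ∩ A).Nonempty}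
  cl_empty := by
    ext x
    simp only [mem_setOf_eq, mem_empty_iff_false, iff_false]
    intro h
    rcases h univ (fun i => (σ i).nhd_univ x) with ⟨y, -, hy⟩
    exact hy
  subset_cl := by
    intro A x hx U hU
    obtain ⟨i⟩ := ‹Nonempty ι›
    exact ⟨x, (σ i).interior_subset U (hU i), hx⟩
  cl_union := by
    intro A B
    ext x
    simp only [mem_setOf_eq, mem_union]
    constructor
    · intro h
      by_contra hc
      push_neg at hc
      obtain ⟨h1, h2⟩ := hc
      simp only [← Set.not_nonempty_iff_eq_empty] at h1 h2
      obtain ⟨U1, hU1, hne1⟩ := h1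
      obtain ⟨U2, hU2, hne2⟩ := h2
      rcases h (U1 ∩ U2) (fun i => (σ i).nhd_inter (hU1 i) (hU2 i)) with ⟨y, hyU, hyAB⟩
      rcases hyAB with hyA | hyB
      · exact hne1 ⟨y, hyU.1, hyA⟩
      · exact hne2 ⟨y, hyU.2, hyB⟩
    · rintro (h | h) U hU
      · rcases h U hU with ⟨y, hy1, hy2⟩
        exact ⟨y, hy1, Or.inl hy2⟩
      · rcases h U hU with ⟨y, hy1, hy2⟩
        exact ⟨y, hy1, Or.inr hy2⟩

/-- The supremum (join) `∨ σ_α` of a collection of closure operators: the union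
`⋃_α 𝒩_α(x)` is a neighbourhood subbase at `x` (neighbourhoods contain finite
intersections of its members), and a point lies in the closure of `A` iff every such
finite intersection meets `A`. -/
def iSupCl {α : Type u} {ι : Type*} (σ : ι → CechClosure α) : CechClosure α where
  cl A := {x | ∀ F : Finset (Set α), (∀ U ∈ F, ∃ i, (σ i).Nhd x U) →
    ((⋂₀ (F : Set (Set α))) ∩ A).Nonempty}
  cl_empty := by
    ext x
    simp only [mem_setOf_eq, mem_empty_iff_false, iff_false]
    intro h
    rcases h ∅ (by simp) with ⟨y, -, hy⟩
    exact hy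
  subset_cl := by
    intro A x hx F hF
    refine ⟨x, ?_, hx⟩
    intro U hU
    rcases hF U hU with ⟨i, hi⟩
    exact (σ i).interior_subset U hi
  cl_union := by
    classical
    intro A B
    ext x
    simp only [mem_setOf_eq, mem_union]
    constructor
    · intro h
      by_contra hc
      push_neg at hc
      obtain ⟨h1, h2⟩ := hc
      simp only [← Set.not_nonempty_iff_eq_empty] at h1 h2
      obtain ⟨F1, hF1, hne1⟩ := h1
      obtain ⟨F2, hF2, hne2⟩ := h2
      rcases h (F1 ∪ F2) (by
        intro U hU
        rcases Finset.mem_union.1 hU with hU | hU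
        · exact hF1 U hU
        · exact hF2 U hU) with ⟨y, hyI, hyAB⟩
      rw [Finset.coe_union, sInter_union] at hyI
      rcases hyAB with hyA | hyB
      · exact hne1 ⟨y, hyI.1, hyA⟩
      · exact hne2 ⟨y, hyI.2, hyB⟩
    · rintro (h | h) F hF
      · rcases h F hF with ⟨y, hy1, hy2⟩
        exact ⟨y, hy1, Or.inl hy2⟩
      · rcases h F hF with ⟨y, hy1, hy2⟩
        exact ⟨y, hy1, Or.inr hy2⟩

theorem cl_mono' (u : CechClosure X) {A B : Set X} (h : A ⊆ B) : u.cl A ⊆ u.cl B := by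
  have hAB : A ∪ B = B := union_eq_self_of_subset_left h
  rw [← hAB, u.cl_union]; exact subset_union_left

theorem nhd_mono' (u : CechClosure X) {x : X} {U V : Set X} (h : U ⊆ V) (hU : u.Nhd x U) :
    u.Nhd x V := by
  intro hc
  exact hU (u.cl_mono' (compl_subset_compl.2 h) hc)

theorem nhd_inter_nonempty (u : CechClosure X) {x : X} {A U : Set X}
    (hx : x ∈ u.cl A) (hU : u.Nhd x U) : (U ∩ A).Nonempty := by
  by_contra h
  rw [not_nonempty_iff_eq_empty] at h
  have hA : A ⊆ Uᶜ := by
    intro a ha haU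
    have : a ∈ (∅ : Set X) := h ▸ ⟨haU, ha⟩
    exact this
  exact hU (u.cl_mono' hA hx)

theorem continuous_iff_nhd (u : CechClosure X) (v : CechClosure Y) (f : X → Y) :
    Continuous u v f ↔ ∀ x U, v.Nhd (f x) U → u.Nhd x (f ⁻¹' U) := by
  constructor
  · intro hf x U hU
    intro hc
    have : f x ∈ f '' u.cl (f ⁻¹' U)ᶜ := ⟨x, hc, rfl⟩
    have h2 : f x ∈ v.cl (f '' (f ⁻¹' U)ᶜ) := hf _ this
    have h3 : f '' (f ⁻¹' U)ᶜ ⊆ Uᶜ := by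
      rintro y ⟨a, ha, rfl⟩
      exact ha
    exact hU (v.cl_mono' h3 h2)
  · intro hf A
    rintro y ⟨x, hx, rfl⟩
    by_contra hc
    have hN : v.Nhd (f x) (f '' A)ᶜ := by
      simp only [Nhd, interior, compl_compl]
      exact hc
    have := hf x _ hN
    have hsub : A ⊆ f ⁻¹' (f '' A) := subset_preimage_image f A
    have hx2 : x ∈ u.cl (f ⁻¹' (f '' A)) := u.cl_mono' hsub hx
    apply this
    simpa only [Nhd, interior, preimage_compl, compl_compl] using hx2

theorem nhd_finset_iInter (u : CechClosure X) {x : X} {β : Type*} (F : Finset β)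
    (f : β → Set X) (h : ∀ b ∈ F, u.Nhd x (f b)) : u.Nhd x (⋂ b ∈ F, f b) := by
  classical
  induction F using Finset.induction_on with
  | empty => simpa using u.nhd_univ x
  | @insert a s ha ih =>
      rw [Finset.set_biInter_insert]
      exact u.nhd_inter (h a (Finset.mem_insert_self a s))
        (ih fun b hb => h b (Finset.mem_insert_of_mem hb))

theorem iSupCl_nhd_iff {α : Type u} {ι : Type*} (σ : ι → CechClosure α) {x : α} {U : Set α} :
    (iSupCl σ).Nhd x U ↔ ∃ F : Finset (Set α),
      (∀ V ∈ F, ∃ i, (σ i).Nhd x V) ∧ ⋂₀ (F : Set (Set α)) ⊆ U := by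
  simp only [Nhd, interior, iSupCl, mem_compl_iff, mem_setOf_eq]
  push_neg
  constructor
  · rintro ⟨F, hF, hne⟩
    rw [← diff_eq, diff_eq_empty] at hne
    exact ⟨F, hF, hne⟩
  · rintro ⟨F, hF, hsub⟩
    refine ⟨F, hF, ?_⟩
    rw [← diff_eq, diff_eq_empty]
    exact hsub

/-- (1) If every `σ_α` is proper, then the infimum `∧ σ_α` and the supremum `∨ σ_α` are
proper.  (2) If every `σ_α` is admissible, then the supremum `∨ σ_α` is admissible. -/
theorem proper_inf_sup_and_admissible_sup (u : CechClosure X) (v : CechClosure Y)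
    {ι : Type u} [Nonempty ι] (σ : ι → CechClosure (ContMap u v)) :
    ((∀ i, Proper u v (σ i)) → Proper u v (iInfCl σ) ∧ Proper u v (iSupCl σ)) ∧
    ((∀ i, Admissible u v (σ i)) → Admissible u v (iSupCl σ)) := by
  classical
  obtain ⟨i₀⟩ := ‹Nonempty ι›
  constructor
  · intro hp
    constructor
    · -- infimum is proper
      intro Z w G hg A
      rintro y ⟨z, hz, rfl⟩
      have hGi : Continuous w (σ i₀) G := hp i₀ Z w G hg
      have hy : G z ∈ (σ i₀).cl (G '' A) := hGi A ⟨z, hz, rfl⟩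
      intro U hU
      exact (σ i₀).nhd_inter_nonempty hy (hU i₀)
    · -- supremum is proper
      intro Z w G hg
      rw [continuous_iff_nhd]
      intro z U hU
      rw [iSupCl_nhd_iff] at hU
      obtain ⟨F, hF, hsub⟩ := hU
      choose idx hidx using hF
      have hnhd : ∀ V (hV : V ∈ F), w.Nhd z (G ⁻¹' V) := by
        intro V hV
        have hGi : Continuous w (σ (idx V hV)) G := hp _ Z w G hg
        exact (continuous_iff_nhd w (σ (idx V hV)) G).1 hGi z V (hidx V hV)
      have : w.Nhd z (⋂ V ∈ F, G ⁻¹' V) :=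
        w.nhd_finset_iInter F _ (fun V hV => hnhd V hV)
      refine w.nhd_mono' ?_ this
      intro a ha
      simp only [mem_iInter, mem_preimage] at ha
      exact hsub (by intro V hV; exact ha V hV)
  · -- supremum is admissible
    intro ha Z w G hG
    apply ha i₀ Z w G
    rw [continuous_iff_nhd]
    intro z U hU
    have hsup : (iSupCl σ).Nhd (G z) U := by
      rw [iSupCl_nhd_iff]
      exact ⟨{U}, by simpa using ⟨i₀, hU⟩, by simp⟩
    exact (continuous_iff_nhd w (iSupCl σ) G).1 hG z U hsup

end CechClosure
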